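/- Let (Ω, 𝔄) be a measurable space, Y : Ω → ℝ^d measurable, C : Ω → [0,∞] measurable, γ > 0, and V : Ω × ℝ → ℝ ∪ {−∞,+∞} such that V(ω, λx) ≤ λ^γ (V(ω,x) + C(ω)) for all ω with C(ω) < +∞, all λ ≥ 1 and all x ∈ ℝ. Let 𝒬 be a nonempty set of probability measures on (Ω,𝔄) with q(C < +∞) = 1 for every q ∈ 𝒬, and assume ω ↦ V(ω, x + h·Y(ω)) is measurable for every (x,h). Define u(x) = sup_{h ∈ ℝ^d} inf_{q ∈ 𝒬} ∫ V(ω, x + h·Y(ω)) q(dω) and c = sup_{q ∈ 𝒬} ∫ C dq. If c < +∞, then u(λx) ≤ λ^γ (u(x) + c) for all λ ≥ 1 and x ∈ ℝ. -/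

import Mathlib

open MeasureTheory
open scoped ENNReal RealInnerProductSpace

/-- Positive part of an extended real, as an extended nonnegative real. -/
noncomputable def epos (x : EReal) : ℝ≥0∞ := if x = ⊤ then ⊤ else ENNReal.ofReal x.toReal

lemma epos_top : epos ⊤ = ⊤ := rfl
lemma epos_bot : epos ⊥ = 0 := by simp [epos]
lemma epos_coe (r : ℝ) : epos r = ENNReal.ofReal r := by simp [epos]

lemma epos_mono : Monotone epos := by
  intro x y hxy
  induction y using EReal.rec with
  | top => simp [epos_top]
  | bot => rw [le_bot_iff] at hxy; simp [hxy, epos_bot]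
  | coe s =>
    induction x using EReal.rec with
    | top => simp_all [top_le_iff]
    | bot => simp [epos_bot]
    | coe r =>
      rw [epos_coe, epos_coe]
      exact ENNReal.ofReal_le_ofReal (by exact_mod_cast hxy)

lemma measurable_epos : Measurable epos := by
  apply Measurable.ite (MeasurableSet.singleton (⊤ : EReal)) measurable_const
  exact ENNReal.measurable_ofReal.comp measurable_ereal_toReal

lemma epos_const_mul {k : ℝ} (hk : 0 < k) (x : EReal) :
    epos ((k : EReal) * x) = ENNReal.ofReal k * epos x := by
  induction x using EReal.rec with
  | top =>
    rw [EReal.coe_mul_top_of_pos hk]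
    rw [epos_top, ENNReal.mul_top (by simp [ENNReal.ofReal_eq_zero, not_le.mpr hk])]
  | bot =>
    rw [EReal.coe_mul_bot_of_pos hk]
    rw [epos_bot, mul_zero]
  | coe r =>
    rw [← EReal.coe_mul, epos_coe, epos_coe, ENNReal.ofReal_mul hk.le]

lemma epos_neg_const_mul {k : ℝ} (hk : 0 < k) (x : EReal) :
    epos (-((k : EReal) * x)) = ENNReal.ofReal k * epos (-x) := by
  have : -((k : EReal) * x) = (k : EReal) * (-x) := (mul_neg _ _).symm
  rw [this, epos_const_mul hk]

lemma epos_add_identity (x : EReal) {c : ℝ≥0∞} (hc : c ≠ ⊤) :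
    epos (x + (c : EReal)) + epos (-x) = epos x + epos (-(x + (c : EReal))) + c := by
  set c' : ℝ := c.toReal with hc'
  have hcc : (c : EReal) = (c' : EReal) := by
    rw [← EReal.coe_toReal (x := (c : EReal)) (by simpa using hc) (EReal.coe_ennreal_ne_bot c),
      EReal.toReal_coe_ennreal]
  have hc0 : 0 ≤ c' := ENNReal.toReal_nonneg
  have hcof : c = ENNReal.ofReal c' := (ENNReal.ofReal_toReal hc).symm
  induction x using EReal.rec with
  | top =>
    rw [hcc, EReal.top_add_coe, epos_top, EReal.neg_top, epos_bot]
    simp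
  | bot =>
    rw [EReal.bot_add, epos_bot, EReal.neg_bot, epos_top]
    simp [hc]
  | coe r =>
    rw [hcc, ← EReal.coe_add, ← EReal.coe_neg, ← EReal.coe_neg, epos_coe, epos_coe, epos_coe,
      epos_coe, hcof]
    rcases le_or_gt 0 r with hr | hr
    · have h1 : 0 ≤ r + c' := by linarith
      rw [ENNReal.ofReal_of_nonpos (by linarith : -r ≤ 0),
        ENNReal.ofReal_of_nonpos (by linarith : -(r + c') ≤ 0), add_zero, add_zero,
        ENNReal.ofReal_add hr hc0]
    · rcases le_or_gt 0 (r + c') with h1 | h1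
      · rw [ENNReal.ofReal_of_nonpos hr.le, ENNReal.ofReal_of_nonpos (by linarith : -(r+c') ≤ 0),
          zero_add, zero_add, ← ENNReal.ofReal_add h1 (by linarith : (0:ℝ) ≤ -r)]
        ring_nf
      · rw [ENNReal.ofReal_of_nonpos h1.le, ENNReal.ofReal_of_nonpos hr.le, zero_add, zero_add,
          ← ENNReal.ofReal_add (by linarith : (0:ℝ) ≤ -(r+c')) hc0]
        ring_nf

lemma epos_neg_le (x : EReal) {c : ℝ≥0∞} (hc : c ≠ ⊤) :
    epos (-x) ≤ epos (-(x + (c : EReal))) + c := by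
  set c' : ℝ := c.toReal with hc'
  have hcc : (c : EReal) = (c' : EReal) := by
    rw [← EReal.coe_toReal (x := (c : EReal)) (by simpa using hc) (EReal.coe_ennreal_ne_bot c),
      EReal.toReal_coe_ennreal]
  have hcof : c = ENNReal.ofReal c' := (ENNReal.ofReal_toReal hc).symm
  induction x using EReal.rec with
  | top => simp [EReal.neg_top, epos_bot]
  | bot => rw [EReal.bot_add]; simp
  | coe r =>
    rw [hcc, ← EReal.coe_add, ← EReal.coe_neg, ← EReal.coe_neg, epos_coe, epos_coe, hcof]
    calc ENNReal.ofReal (-r) = ENNReal.ofReal (-(r + c') + c') := by ring_nf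
    _ ≤ _ := ENNReal.ofReal_add_le


/-- Integral of an extended-real function with the convention `+∞ - ∞ = -∞` :
it equals `∫ f⁺ - ∫ f⁻` when one of the two parts is finite, and `-∞` when both are
infinite (in `EReal`, `⊤ - ⊤ = ⊥`). -/
noncomputable def eIntegral {Ω : Type*} [MeasurableSpace Ω] (μ : Measure Ω)
    (f : Ω → EReal) : EReal :=
  ((∫⁻ ω, epos (f ω) ∂μ : ℝ≥0∞) : EReal) - ((∫⁻ ω, epos (-(f ω)) ∂μ : ℝ≥0∞) : EReal)

lemma eIntegral_mono_ae {Ω : Type*} [MeasurableSpace Ω] {μ : Measure Ω} {f g : Ω → EReal}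
    (h : ∀ᵐ ω ∂μ, f ω ≤ g ω) : eIntegral μ f ≤ eIntegral μ g := by
  refine EReal.sub_le_sub ?_ ?_
  · exact EReal.coe_ennreal_le_coe_ennreal_iff.2
      (lintegral_mono_ae (h.mono fun ω hω => epos_mono hω))
  · exact EReal.coe_ennreal_le_coe_ennreal_iff.2
      (lintegral_mono_ae (h.mono fun ω hω => epos_mono (EReal.neg_le_neg_iff.2 hω)))

lemma ereal_coe_ennreal_fin {x : ℝ≥0∞} (hx : x ≠ ⊤) :
    ((x : ℝ≥0∞) : EReal) = ((x.toReal : ℝ) : EReal) := by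
  rw [← EReal.coe_toReal (x := (x : EReal)) (by simpa using hx) (EReal.coe_ennreal_ne_bot x),
    EReal.toReal_coe_ennreal]

lemma coe_mul_sub {k : ℝ} (hk : 0 < k) (A B : ℝ≥0∞) :
    ((ENNReal.ofReal k * A : ℝ≥0∞) : EReal) - ((ENNReal.ofReal k * B : ℝ≥0∞) : EReal)
      = (k : EReal) * ((A : EReal) - (B : EReal)) := by
  have hK0 : ENNReal.ofReal k ≠ 0 := by simp [ENNReal.ofReal_eq_zero, not_le.mpr hk]
  have hKt : ENNReal.ofReal k ≠ ⊤ := ENNReal.ofReal_ne_top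
  rcases eq_or_ne A ⊤ with hA | hA
  · rcases eq_or_ne B ⊤ with hB | hB
    · rw [hA, hB, ENNReal.mul_top hK0, EReal.coe_ennreal_top, EReal.sub_top,
        EReal.coe_mul_bot_of_pos hk]
    · rw [hA, ENNReal.mul_top hK0, EReal.coe_ennreal_top,
        ereal_coe_ennreal_fin (ENNReal.mul_ne_top hKt hB), ereal_coe_ennreal_fin hB,
        EReal.top_sub_coe, EReal.top_sub_coe, EReal.coe_mul_top_of_pos hk]
  · rcases eq_or_ne B ⊤ with hB | hB
    · rw [hB, ENNReal.mul_top hK0, EReal.coe_ennreal_top, EReal.sub_top, EReal.sub_top,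
        EReal.coe_mul_bot_of_pos hk]
    · rw [ereal_coe_ennreal_fin (ENNReal.mul_ne_top hKt hA),
        ereal_coe_ennreal_fin (ENNReal.mul_ne_top hKt hB), ereal_coe_ennreal_fin hA,
        ereal_coe_ennreal_fin hB, ← EReal.coe_sub, ← EReal.coe_sub, ← EReal.coe_mul,
        EReal.coe_eq_coe_iff]
      rw [ENNReal.toReal_mul, ENNReal.toReal_mul, ENNReal.toReal_ofReal hk.le]
      ring

lemma eIntegral_const_mul {Ω : Type*} [MeasurableSpace Ω] (μ : Measure Ω) {k : ℝ} (hk : 0 < k)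
    (f : Ω → EReal) :
    eIntegral μ (fun ω => (k : EReal) * f ω) = (k : EReal) * eIntegral μ f := by
  unfold eIntegral
  simp_rw [epos_const_mul hk, epos_neg_const_mul hk]
  rw [lintegral_const_mul' _ _ ENNReal.ofReal_ne_top,
    lintegral_const_mul' _ _ ENNReal.ofReal_ne_top]
  exact coe_mul_sub hk _ _

lemma coe_sub_le_arith {a' b' a b k : ℝ≥0∞} (hk : k ≠ ⊤) (heq : a' + b = a + b' + k)
    (hb : b ≤ b' + k) :
    ((a' : EReal) - (b' : EReal)) ≤ ((a : EReal) - (b : EReal)) + (k : EReal) := by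
  rcases eq_or_ne b' ⊤ with hb' | hb'
  · rw [hb', EReal.coe_ennreal_top, EReal.sub_top]
    exact bot_le
  · have hbt : b ≠ ⊤ := ne_top_of_le_ne_top (ENNReal.add_ne_top.2 ⟨hb', hk⟩) hb
    rcases eq_or_ne a ⊤ with ha | ha
    · rw [ha, EReal.coe_ennreal_top, ereal_coe_ennreal_fin hbt, EReal.top_sub_coe,
        ereal_coe_ennreal_fin hk, EReal.top_add_coe]
      exact le_top
    · have ha' : a' ≠ ⊤ := by
        intro h
        have : a' + b = ⊤ := by rw [h]; simp
        rw [heq] at this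
        exact (ENNReal.add_ne_top.2 ⟨ENNReal.add_ne_top.2 ⟨ha, hb'⟩, hk⟩) this
      have htr : a'.toReal + b.toReal = a.toReal + b'.toReal + k.toReal := by
        have := congrArg ENNReal.toReal heq
        rwa [ENNReal.toReal_add ha' hbt, ENNReal.toReal_add (ENNReal.add_ne_top.2 ⟨ha, hb'⟩) hk,
          ENNReal.toReal_add ha hb'] at this
      rw [ereal_coe_ennreal_fin ha', ereal_coe_ennreal_fin hb', ereal_coe_ennreal_fin ha,
        ereal_coe_ennreal_fin hbt, ereal_coe_ennreal_fin hk, ← EReal.coe_sub, ← EReal.coe_sub,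
        ← EReal.coe_add, EReal.coe_le_coe_iff]
      linarith

lemma eIntegral_add_ennreal_le {Ω : Type*} [MeasurableSpace Ω] {μ : Measure Ω} {f : Ω → EReal}
    (hf : Measurable f) {C : Ω → ℝ≥0∞} (hCm : Measurable C) (hC : ∫⁻ ω, C ω ∂μ ≠ ⊤) :
    eIntegral μ (fun ω => f ω + (C ω : EReal)) ≤
      eIntegral μ f + ((∫⁻ ω, C ω ∂μ : ℝ≥0∞) : EReal) := by
  have hae : ∀ᵐ ω ∂μ, C ω ≠ ⊤ := by
    filter_upwards [ae_lt_top hCm hC] with ω h using h.ne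
  have hmB : Measurable fun ω => epos (-(f ω)) :=
    measurable_epos.comp (continuous_neg.measurable.comp hf)
  have hmA : Measurable fun ω => epos (f ω) := measurable_epos.comp hf
  have heq : (∫⁻ ω, epos (f ω + (C ω : EReal)) ∂μ) + ∫⁻ ω, epos (-(f ω)) ∂μ
      = (∫⁻ ω, epos (f ω) ∂μ) + (∫⁻ ω, epos (-(f ω + (C ω : EReal))) ∂μ) + ∫⁻ ω, C ω ∂μ := by
    rw [← lintegral_add_right _ hmB, add_assoc, ← lintegral_add_right _ hCm,
      ← lintegral_add_left hmA]
    apply lintegral_congr_ae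
    filter_upwards [hae] with ω hω
    rw [← add_assoc]
    exact epos_add_identity (f ω) hω
  have hble : (∫⁻ ω, epos (-(f ω)) ∂μ) ≤ (∫⁻ ω, epos (-(f ω + (C ω : EReal))) ∂μ) + ∫⁻ ω, C ω ∂μ := by
    rw [← lintegral_add_right _ hCm]
    exact lintegral_mono_ae (by filter_upwards [hae] with ω hω using epos_neg_le (f ω) hω)
  exact coe_sub_le_arith hC heq hble

lemma iInf_scale_shift_le {ι : Type*} {s : Set ι} {k : ℝ} (hk : 0 < k)
    (c : ℝ) (f : ι → EReal) :
    (⨅ q ∈ s, (k : EReal) * (f q + (c : EReal))) ≤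
      (k : EReal) * ((⨅ q ∈ s, f q) + (c : EReal)) := by
  set B := ⨅ q ∈ s, f q with hB
  have key : ∀ z : ℝ, B < (z : EReal) →
      (⨅ q ∈ s, (k : EReal) * (f q + (c : EReal))) ≤ (k : EReal) * ((z : EReal) + (c : EReal)) := by
    intro z hz
    rw [hB, iInf_lt_iff] at hz
    obtain ⟨q, hq⟩ := hz
    rw [iInf_lt_iff] at hq
    obtain ⟨hqs, hql⟩ := hq
    refine le_trans (iInf₂_le q hqs) ?_
    exact mul_le_mul_of_nonneg_left (add_le_add_left hql.le _) (by exact_mod_cast hk.le)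
  rcases eq_or_ne B ⊤ with hBt | hBt
  · rw [hBt, EReal.top_add_coe, EReal.coe_mul_top_of_pos hk]
    exact le_top
  · by_contra hcon
    push_neg at hcon
    obtain ⟨x, hx1, hx2⟩ := EReal.lt_iff_exists_real_btwn.1 hcon
    set z : ℝ := x / k - c with hzdef
    have hBz : B < (z : EReal) := by
      rcases eq_or_ne B ⊥ with hBb | hBb
      · rw [hBb]; exact EReal.bot_lt_coe z
      · set r : ℝ := B.toReal with hrdef
        have hBr : B = (r : EReal) := (EReal.coe_toReal hBt hBb).symm
        rw [hBr] at hx1 ⊢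
        rw [← EReal.coe_add, ← EReal.coe_mul] at hx1
        have hr : k * (r + c) < x := EReal.coe_lt_coe_iff.1 hx1
        rw [EReal.coe_lt_coe_iff, hzdef]
        have : r + c < x / k := by rw [lt_div_iff₀ hk]; linarith [mul_comm (r + c) k]
        linarith
    have hfin : (⨅ q ∈ s, (k : EReal) * (f q + (c : EReal))) ≤ (x : EReal) := by
      have := key z hBz
      rwa [← EReal.coe_add, ← EReal.coe_mul, show k * (z + c) = x by rw [hzdef]; field_simp; ring] at this
    exact absurd (lt_of_lt_of_le hx2 hfin) (lt_irrefl _)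

/-- If `V(ω, λx) ≤ λ^γ (V(ω,x) + C(ω))` whenever `C(ω) < ∞`, each prior `q ∈ 𝒬` is a
probability measure with `q(C < ∞) = 1`, and `c = sup_{q ∈ 𝒬} ∫ C dq < ∞`, then the
value function `u(x) = sup_h inf_{q ∈ 𝒬} ∫ V(ω, x + h·Y(ω)) q(dω)` satisfies
`u(λx) ≤ λ^γ (u(x) + c)` for all `λ ≥ 1`, `x ∈ ℝ`. -/
theorem value_function_elasticity {Ω : Type*} [MeasurableSpace Ω] (d : ℕ)
    (Y : Ω → EuclideanSpace ℝ (Fin d)) (hY : Measurable Y)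
    (C : Ω → ℝ≥0∞) (hCm : Measurable C) (γ : ℝ) (hγ : 0 < γ)
    (V : Ω × ℝ → EReal)
    (hV : ∀ ω : Ω, C ω ≠ ⊤ → ∀ l x : ℝ, 1 ≤ l →
      V (ω, l * x) ≤ ((l ^ γ : ℝ) : EReal) * (V (ω, x) + (C ω : EReal)))
    (Q : Set (Measure Ω)) (hQne : Q.Nonempty)
    (hQprob : ∀ q ∈ Q, IsProbabilityMeasure q)
    (hQC : ∀ q ∈ Q, q {ω | C ω ≠ ⊤} = 1)
    (hVmeas : ∀ (x : ℝ) (h : EuclideanSpace ℝ (Fin d)),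
      Measurable fun ω => V (ω, x + ⟪h, Y ω⟫))
    (c : ℝ≥0∞) (hc : c = ⨆ q ∈ Q, ∫⁻ ω, C ω ∂q) (hcfin : c ≠ ⊤) :
    ∀ l x : ℝ, 1 ≤ l →
      (⨆ h : EuclideanSpace ℝ (Fin d), ⨅ q ∈ Q,
          eIntegral q fun ω => V (ω, l * x + ⟪h, Y ω⟫)) ≤
        ((l ^ γ : ℝ) : EReal) *
          ((⨆ h : EuclideanSpace ℝ (Fin d), ⨅ q ∈ Q,
              eIntegral q fun ω => V (ω, x + ⟪h, Y ω⟫)) + (c : EReal)) := by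
  intro l x hl
  have hl0 : (0 : ℝ) < l := lt_of_lt_of_le one_pos hl
  have hk : 0 < l ^ γ := Real.rpow_pos_of_pos hl0 γ
  have hcE : (c : EReal) = ((c.toReal : ℝ) : EReal) := ereal_coe_ennreal_fin hcfin
  apply iSup_le
  intro h
  set h₀ : EuclideanSpace ℝ (Fin d) := l⁻¹ • h with hh0
  have harg : ∀ ω, l * x + ⟪h, Y ω⟫ = l * (x + ⟪h₀, Y ω⟫) := by
    intro ω
    have hi : l * ⟪h₀, Y ω⟫ = ⟪h, Y ω⟫ := by
      rw [hh0, real_inner_smul_left]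
      field_simp
    rw [← hi]; ring
  have step : ∀ q ∈ Q, (eIntegral q fun ω => V (ω, l * x + ⟪h, Y ω⟫)) ≤
      ((l ^ γ : ℝ) : EReal) *
        ((eIntegral q fun ω => V (ω, x + ⟪h₀, Y ω⟫)) + (c : EReal)) := by
    intro q hq
    haveI := hQprob q hq
    have haeC : ∀ᵐ ω ∂q, C ω ≠ ⊤ := by
      have hs : MeasurableSet {ω | C ω ≠ ⊤} := (hCm (measurableSet_singleton ⊤)).compl
      rw [ae_iff]
      have hset : {ω | ¬ C ω ≠ ⊤} = {ω | C ω ≠ ⊤}ᶜ := by ext ω; simp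
      rw [hset, measure_compl hs (measure_ne_top q _), hQC q hq, measure_univ, tsub_self]
    have hcq_le : ∫⁻ ω, C ω ∂q ≤ c := by
      rw [hc]
      exact le_iSup₂ (f := fun (q : Measure Ω) (_ : q ∈ Q) => ∫⁻ ω, C ω ∂q) q hq
    have hcq_fin : ∫⁻ ω, C ω ∂q ≠ ⊤ := ne_top_of_le_ne_top hcfin hcq_le
    calc (eIntegral q fun ω => V (ω, l * x + ⟪h, Y ω⟫))
        ≤ eIntegral q fun ω =>
            ((l ^ γ : ℝ) : EReal) * (V (ω, x + ⟪h₀, Y ω⟫) + (C ω : EReal)) := by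
          apply eIntegral_mono_ae
          filter_upwards [haeC] with ω hω
          rw [harg ω]
          exact hV ω hω l (x + ⟪h₀, Y ω⟫) hl
      _ = ((l ^ γ : ℝ) : EReal) *
            eIntegral q (fun ω => V (ω, x + ⟪h₀, Y ω⟫) + (C ω : EReal)) :=
          eIntegral_const_mul q hk _
      _ ≤ ((l ^ γ : ℝ) : EReal) *
            ((eIntegral q fun ω => V (ω, x + ⟪h₀, Y ω⟫)) +
              ((∫⁻ ω, C ω ∂q : ℝ≥0∞) : EReal)) := by
          exact mul_le_mul_of_nonneg_left
            (eIntegral_add_ennreal_le (hVmeas x h₀) hCm hcq_fin) (by exact_mod_cast hk.le)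
      _ ≤ ((l ^ γ : ℝ) : EReal) *
            ((eIntegral q fun ω => V (ω, x + ⟪h₀, Y ω⟫)) + (c : EReal)) := by
          exact mul_le_mul_of_nonneg_left
            (add_le_add_right (EReal.coe_ennreal_le_coe_ennreal_iff.2 hcq_le) _)
            (by exact_mod_cast hk.le)
  calc (⨅ q ∈ Q, eIntegral q fun ω => V (ω, l * x + ⟪h, Y ω⟫))
      ≤ ⨅ q ∈ Q, ((l ^ γ : ℝ) : EReal) *
          ((eIntegral q fun ω => V (ω, x + ⟪h₀, Y ω⟫)) + (c : EReal)) :=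
        le_iInf₂ fun q hq => (iInf₂_le q hq).trans (step q hq)
    _ ≤ ((l ^ γ : ℝ) : EReal) *
          ((⨅ q ∈ Q, eIntegral q fun ω => V (ω, x + ⟪h₀, Y ω⟫)) + (c : EReal)) := by
        rw [hcE]
        exact iInf_scale_shift_le hk _ _
    _ ≤ ((l ^ γ : ℝ) : EReal) *
          ((⨆ h' : EuclideanSpace ℝ (Fin d), ⨅ q ∈ Q,
              eIntegral q fun ω => V (ω, x + ⟪h', Y ω⟫)) + (c : EReal)) := by
        exact mul_le_mul_of_nonneg_left
          (add_le_add_left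
            (le_iSup (fun h' => ⨅ q ∈ Q, eIntegral q fun ω => V (ω, x + ⟪h', Y ω⟫)) h₀) _)
          (by exact_mod_cast hk.le)
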